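/- arXiv:2008.06124 — 4 statements merged into one kernel-verified Lean document; each statement's English description precedes it below -/
import Mathlib

section
/- Let k be a number field of degree d that is not a CM-field, let r be the rank of the unit group O_k^×, and let α_1, …, α_r be multiplicatively independent units in O_k^×. Then k = ℚ(α_1, α_2, …, α_r). -/
open NumberField

/-- A number field is a CM-field if it is a totally imaginary quadratic extension of a totally
real subfield. -/
def IsCMField (K : Type*) [Field K] [NumberField K] : Prop :=
  (∀ w : InfinitePlace K, w.IsComplex) ∧
    ∃ F : IntermediateField ℚ K,
      (∀ w : InfinitePlace F, w.IsReal) ∧ Module.finrank F K = 2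

/-- A family of elements of a commutative group is multiplicatively independent if the only
integer-power product relation among them is the trivial one. -/
def MultIndep {G : Type*} [CommGroup G] {ι : Type*} [Fintype ι] (g : ι → G) : Prop :=
  ∀ m : ι → ℤ, (∏ i, g i ^ m i) = 1 → m = 0

set_option maxSynthPendingDepth 2 in
/-- A multiplicatively independent family of units has cardinality at most the unit rank. -/
lemma multIndep_le_rank (F : Type*) [Field F] [NumberField F] {r : ℕ}
    (β : Fin r → (𝓞 F)ˣ) (hβ : MultIndep β) : r ≤ Units.rank F := by
  have hli : LinearIndependent ℤ
      (fun i : Fin r => Additive.ofMul (QuotientGroup.mk (β i) : (𝓞 F)ˣ ⧸ Units.torsion F)) := by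
    rw [Fintype.linearIndependent_iff]
    intro m hm
    have h1 : (QuotientGroup.mk (∏ i, β i ^ m i) : (𝓞 F)ˣ ⧸ Units.torsion F) = 1 := by
      rw [← ofMul_eq_zero, ← hm]
      simp [ofMul_prod, ofMul_zpow]
    rw [QuotientGroup.eq_one_iff] at h1
    have h2 : IsOfFinOrder (∏ i, β i ^ m i) := (CommGroup.mem_torsion _).mp h1
    obtain ⟨n, hn, hpow⟩ := isOfFinOrder_iff_pow_eq_one.mp h2
    have h3 : (∏ i, β i ^ (m i * n)) = 1 := by
      rw [← hpow, ← Finset.prod_pow]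
      exact Finset.prod_congr rfl fun i _ => by rw [← zpow_natCast (β i ^ m i) n, ← zpow_mul]
    have h4 := hβ _ h3
    intro i
    have h5 := congrFun h4 i
    simp only [Pi.zero_apply, mul_eq_zero] at h5
    rcases h5 with h | h
    · exact h
    · exact absurd h (by exact_mod_cast hn.ne')
  have := hli.fintype_card_le_finrank
  rwa [Fintype.card_fin, Units.rank_modTorsion] at this

/-- If `K` is not a CM-field, a proper subfield of `K` has strictly fewer infinite places. -/
lemma card_infinitePlace_lt (K : Type*) [Field K] [NumberField K] (hCM : ¬ _root_.IsCMField K)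
    (F : IntermediateField ℚ K) (hF : F ≠ ⊤) :
    Fintype.card (InfinitePlace F) < Fintype.card (InfinitePlace K) := by
  have hle : Fintype.card (InfinitePlace F) ≤ Fintype.card (InfinitePlace K) :=
    InfinitePlace.card_mono F K
  rcases lt_or_eq_of_le hle with h | hc
  · exact h
  exfalso
  set cK := Fintype.card (InfinitePlace K) with hcK
  set cF := Fintype.card (InfinitePlace F) with hcF
  have hSK : ∑ w : InfinitePlace K, InfinitePlace.mult w = Module.finrank ℚ K :=
    InfinitePlace.sum_mult_eq (K := K)
  have hSF : ∑ w : InfinitePlace F, InfinitePlace.mult w = Module.finrank ℚ F :=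
    InfinitePlace.sum_mult_eq (K := F)
  have htower : Module.finrank ℚ F * Module.finrank F K = Module.finrank ℚ K :=
    Module.finrank_mul_finrank ℚ F K
  have hmult_le : ∀ w : InfinitePlace K, InfinitePlace.mult w ≤ 2 := by
    intro w
    rw [InfinitePlace.mult]; split_ifs <;> omega
  have hmult_ge : ∀ w : InfinitePlace F, 1 ≤ InfinitePlace.mult w := by
    intro w
    rw [InfinitePlace.mult]; split_ifs <;> omega
  have hSK_le : ∑ w : InfinitePlace K, InfinitePlace.mult w ≤ 2 * cK := by
    calc ∑ w : InfinitePlace K, InfinitePlace.mult w ≤ ∑ _w : InfinitePlace K, 2 :=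
          Finset.sum_le_sum fun w _ => hmult_le w
      _ = 2 * cK := by simp [mul_comm, hcK]
  have hcF_le : cF ≤ ∑ w : InfinitePlace F, InfinitePlace.mult w := by
    calc cF = ∑ _w : InfinitePlace F, 1 := by simp [hcF]
      _ ≤ ∑ w : InfinitePlace F, InfinitePlace.mult w :=
          Finset.sum_le_sum fun w _ => hmult_ge w
  have hcFpos : 0 < cF := Fintype.card_pos
  have hSFpos : 0 < Module.finrank ℚ F := by omega
  have hd1 : Module.finrank F K ≠ 1 := by
    intro h
    apply hF
    refine IntermediateField.eq_of_le_of_finrank_eq le_top ?_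
    rw [IntermediateField.finrank_top']
    rw [h, mul_one] at htower
    exact htower
  have hdpos : 0 < Module.finrank F K := Module.finrank_pos
  have hd : 2 ≤ Module.finrank F K := by omega
  have hchain : Module.finrank ℚ F * Module.finrank F K ≤ 2 * Module.finrank ℚ F := by
    omega
  have hd2 : Module.finrank F K = 2 := by nlinarith
  rw [hd2] at htower
  have hSKeq : ∑ w : InfinitePlace K, InfinitePlace.mult w = 2 * cK := by omega
  have hSFeq : ∑ w : InfinitePlace F, InfinitePlace.mult w = cF := by omega
  apply hCM
  constructor
  · intro w
    by_contra hw
    rw [InfinitePlace.not_isComplex_iff_isReal] at hw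
    have : ∑ w : InfinitePlace K, InfinitePlace.mult w < ∑ _w : InfinitePlace K, 2 := by
      refine Finset.sum_lt_sum (fun i _ => hmult_le i) ⟨w, Finset.mem_univ w, ?_⟩
      rw [InfinitePlace.mult, if_pos hw]; omega
    simp [mul_comm] at this
    omega
  · refine ⟨F, fun w => ?_, hd2⟩
    by_contra hw
    rw [InfinitePlace.not_isReal_iff_isComplex] at hw
    have : ∑ _w : InfinitePlace F, 1 < ∑ w : InfinitePlace F, InfinitePlace.mult w := by
      refine Finset.sum_lt_sum (fun i _ => hmult_ge i) ⟨w, Finset.mem_univ w, ?_⟩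
      rw [InfinitePlace.mult, if_neg (InfinitePlace.not_isReal_iff_isComplex.mpr hw)]; omega
    simp at this
    omega

set_option synthInstance.maxHeartbeats 1000000 in
set_option maxHeartbeats 1000000 in
/-- **(Akhtari–Vaaler, (5.3)).**  If `k` is a number field that is not a CM-field, with unit rank
`r`, and `α_1, …, α_r` are multiplicatively independent units in `O_k^×`, then
`k = ℚ(α_1, …, α_r)`. -/
theorem adjoin_indep_units_eq_top (K : Type*) [Field K] [NumberField K]
    (hCM : ¬ _root_.IsCMField K) (r : ℕ) (hr : r = NumberField.Units.rank K)
    (α : Fin r → (𝓞 K)ˣ) (hα : MultIndep α) :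
    IntermediateField.adjoin ℚ (Set.range fun i => ((α i : 𝓞 K) : K)) = ⊤ := by
  by_contra hF0
  obtain ⟨F, hFdef, hF⟩ : ∃ F : IntermediateField ℚ K,
      F = IntermediateField.adjoin ℚ (Set.range fun i => ((α i : 𝓞 K) : K)) ∧ F ≠ ⊤ :=
    ⟨_, rfl, hF0⟩
  have hmem : ∀ i, ((α i : 𝓞 K) : K) ∈ F := fun i =>
    hFdef ▸ IntermediateField.subset_adjoin ℚ _ ⟨i, rfl⟩
  have hmulinv : ∀ i, ((α i : 𝓞 K) : K) * ((((α i)⁻¹ : (𝓞 K)ˣ) : 𝓞 K) : K) = 1 := by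
    intro i
    rw [← map_mul, ← Units.val_mul]
    simp
  have hinv : ∀ i, ((((α i)⁻¹ : (𝓞 K)ˣ) : 𝓞 K) : K) ∈ F := by
    intro i
    have h2 : ((((α i)⁻¹ : (𝓞 K)ˣ) : 𝓞 K) : K) = (((α i : 𝓞 K) : K))⁻¹ :=
      eq_inv_of_mul_eq_one_right (hmulinv i)
    rw [h2]
    exact F.inv_mem (hmem i)
  let ψ : (𝓞 F)ˣ →* (𝓞 K)ˣ :=
    Units.map (RingOfIntegers.mapRingHom (algebraMap F K)).toMonoidHom
  have hint : ∀ i, IsIntegral ℤ ((⟨((α i : 𝓞 K) : K), hmem i⟩ : F)) := by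
    intro i
    rw [← isIntegral_algebraMap_iff (algebraMap (↥F) K).injective]
    exact (α i : 𝓞 K).isIntegral_coe
  have hint' : ∀ i, IsIntegral ℤ ((⟨((((α i)⁻¹ : (𝓞 K)ˣ) : 𝓞 K) : K), hinv i⟩ : F)) := by
    intro i
    rw [← isIntegral_algebraMap_iff (algebraMap (↥F) K).injective]
    exact (((α i)⁻¹ : (𝓞 K)ˣ) : 𝓞 K).isIntegral_coe
  have key : ∀ i, ∃ u : (𝓞 F)ˣ, ψ u = α i := by
    intro i
    have hab : ((⟨(⟨((α i : 𝓞 K) : K), hmem i⟩ : F), hint i⟩ : 𝓞 F) *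
        (⟨(⟨((((α i)⁻¹ : (𝓞 K)ˣ) : 𝓞 K) : K), hinv i⟩ : F), hint' i⟩ : 𝓞 F)) = 1 := by
      ext
      push_cast
      exact hmulinv i
    refine ⟨(IsUnit.of_mul_eq_one _ hab).unit, ?_⟩
    ext
    rfl
  choose β hspec using key
  have hβ : MultIndep β := by
    intro m hm
    apply hα
    have h := congrArg ψ hm
    simp only [map_prod, map_zpow, hspec, map_one] at h
    exact h
  have h1 : r ≤ Units.rank F := multIndep_le_rank F β hβ
  have h2 : Fintype.card (InfinitePlace F) < Fintype.card (InfinitePlace K) :=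
    card_infinitePlace_lt K hCM F hF
  have h3 : 0 < Fintype.card (InfinitePlace F) := Fintype.card_pos
  rw [Units.rank] at h1 hr
  omega
end

section
/- Let k be a number field of degree d, and for subfields k' of k define λ(k') to be the maximum length of a tower of distinct subfields of k beginning at ℚ and ending at k' (with λ(ℚ) = 0), and ℵ(k') = (2·[k : k'])^{λ(k') - λ(k)}. If ℚ ⊆ k_1 ⊆ k_2 ⊆ ⋯ ⊆ k_{N-1} ⊆ k_N = k is a tower of N+1 pairwise distinct number fields, then 0 < ℵ(ℚ) < ℵ(k_1) < ℵ(k_2) < ⋯ < ℵ(k_{N-1}) < ℵ(k_N) = 1. -/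
/-- `lambdaTower K F` is the maximum length of a tower of distinct subfields of `K` beginning at
`ℚ` and ending at `F` (so `lambdaTower K ⊥ = 0`). -/
noncomputable def lambdaTower (K : Type*) [Field K] [NumberField K]
    (F : IntermediateField ℚ K) : ℕ :=
  sSup {n | ∃ c : Fin (n + 1) → IntermediateField ℚ K,
    StrictMono c ∧ c 0 = ⊥ ∧ c (Fin.last n) = F}

/-- `aleph K F = (2 [K : F])^{λ(F) - λ(K)}`. -/
noncomputable def aleph (K : Type*) [Field K] [NumberField K]
    (F : IntermediateField ℚ K) : ℝ :=
  (2 * (Module.finrank F K : ℝ)) ^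
    ((lambdaTower K F : ℤ) - (lambdaTower K (⊤ : IntermediateField ℚ K) : ℤ))

/-- Appending a strictly larger element to a strictly monotone `Fin`-indexed chain keeps it
strictly monotone. -/
lemma strictMono_snoc' {α : Type*} [Preorder α] {n : ℕ} {f : Fin (n + 1) → α} {x : α}
    (hf : StrictMono f) (hx : f (Fin.last n) < x) : StrictMono (Fin.snoc f x) := by
  intro a b hab
  rcases Fin.eq_castSucc_or_eq_last b with ⟨b', rfl⟩ | rfl
  · rcases Fin.eq_castSucc_or_eq_last a with ⟨a', rfl⟩ | rfl
    · rw [Fin.snoc_castSucc, Fin.snoc_castSucc]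
      exact hf (by exact_mod_cast hab)
    · exact absurd hab (Fin.castSucc_lt_last b').le.not_gt
  · rcases Fin.eq_castSucc_or_eq_last a with ⟨a', rfl⟩ | rfl
    · rw [Fin.snoc_castSucc, Fin.snoc_last]
      exact lt_of_le_of_lt (hf.monotone (Fin.le_last a')) hx
    · exact absurd hab (lt_irrefl _)

/-- There are finitely many intermediate fields of a number field. -/
lemma finite_intermediateField_of_numberField (K : Type*) [Field K] [NumberField K] :
    Finite (IntermediateField ℚ K) :=
  Field.finite_intermediateField_of_exists_primitive_element ℚ K
    (Field.exists_primitive_element ℚ K)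

/-- The set of tower lengths ending at `F` is bounded above. -/
lemma lambdaTower_set_bddAbove (K : Type*) [Field K] [NumberField K]
    (F : IntermediateField ℚ K) :
    BddAbove {n | ∃ c : Fin (n + 1) → IntermediateField ℚ K,
      StrictMono c ∧ c 0 = ⊥ ∧ c (Fin.last n) = F} := by
  have : Finite (IntermediateField ℚ K) := finite_intermediateField_of_numberField K
  refine ⟨Nat.card (IntermediateField ℚ K), fun n hn => ?_⟩
  obtain ⟨c, hc, -, -⟩ := hn
  have := Nat.card_le_card_of_injective c hc.injective
  simp only [Nat.card_eq_fintype_card, Fintype.card_fin] at this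
  omega

/-- **(Akhtari–Vaaler, Lemma 6.1).**  If `ℚ ⊆ k_1 ⊆ ⋯ ⊆ k_N = k` is a tower of `N+1` pairwise
distinct subfields of a number field `k`, then
`0 < ℵ(ℚ) < ℵ(k_1) < ⋯ < ℵ(k_{N-1}) < ℵ(k_N) = 1`. -/
theorem aleph_strictMono_on_tower (K : Type*) [Field K] [NumberField K]
    (N : ℕ) (c : Fin (N + 1) → IntermediateField ℚ K)
    (hmono : StrictMono c) (h0 : c 0 = ⊥) (hlast : c (Fin.last N) = ⊤) :
    0 < aleph K (c 0) ∧
      StrictMono (fun i => aleph K (c i)) ∧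
      aleph K (c (Fin.last N)) = 1 := by
  -- the defining set of `lambdaTower`
  set S : IntermediateField ℚ K → Set ℕ := fun F =>
    {n | ∃ d : Fin (n + 1) → IntermediateField ℚ K,
      StrictMono d ∧ d 0 = ⊥ ∧ d (Fin.last n) = F} with hS
  have hbdd : ∀ F, BddAbove (S F) := fun F => lambdaTower_set_bddAbove K F
  -- membership: each `c j` is the end of a tower of length `j`
  have hmem : ∀ j : Fin (N + 1), (j : ℕ) ∈ S (c j) := by
    intro j
    refine ⟨fun i => c ⟨i.1, by omega⟩, ?_, ?_, ?_⟩
    · intro a b hab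
      exact hmono (show (⟨a.1, by omega⟩ : Fin (N + 1)) < ⟨b.1, by omega⟩ from hab)
    · simpa using h0
    · simp [Fin.last]
  have hne : ∀ j : Fin (N + 1), (S (c j)).Nonempty := fun j => ⟨j, hmem j⟩
  -- strict monotonicity of `lambdaTower` along the tower
  have hstep : ∀ i j : Fin (N + 1), i < j →
      lambdaTower K (c i) < lambdaTower K (c j) := by
    intro i j hij
    set n := lambdaTower K (c i) with hn
    have hsup : n ∈ S (c i) := Nat.sSup_mem (hne i) (hbdd _)
    obtain ⟨d, hd, hd0, hdl⟩ := hsup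
    have hnew : (n + 1) ∈ S (c j) := by
      refine ⟨Fin.snoc d (c j), strictMono_snoc' hd (by rw [hdl]; exact hmono hij), ?_, ?_⟩
      · rw [show (0 : Fin (n + 1 + 1)) = Fin.castSucc 0 from rfl, Fin.snoc_castSucc]
        exact hd0
      · simp [Fin.snoc_last]
    exact lt_of_lt_of_le (Nat.lt_succ_self n) (le_csSup (hbdd _) hnew)
  have hle : ∀ j : Fin (N + 1),
      lambdaTower K (c j) ≤ lambdaTower K (⊤ : IntermediateField ℚ K) := by
    intro j
    rw [← hlast]
    rcases eq_or_lt_of_le (Fin.le_last j) with h | h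
    · rw [h]
    · exact (hstep j (Fin.last N) h).le
  -- finrank facts
  have hfrpos : ∀ F : IntermediateField ℚ K, 0 < Module.finrank F K := fun F =>
    Module.finrank_pos
  have hfrle : ∀ i j : Fin (N + 1), i < j →
      Module.finrank (c j) K ≤ Module.finrank (c i) K := by
    intro i j hij
    refine Nat.le_of_dvd (hfrpos _) ?_
    exact Dvd.intro_left _ (IntermediateField.relfinrank_mul_finrank_top (hmono hij).le)
  -- main strict monotonicity of aleph
  have key : ∀ i j : Fin (N + 1), i < j → aleph K (c i) < aleph K (c j) := by
    intro i j hij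
    unfold aleph
    set A : ℝ := 2 * (Module.finrank (c i) K : ℝ) with hA
    set B : ℝ := 2 * (Module.finrank (c j) K : ℝ) with hB
    set L : ℤ := (lambdaTower K (⊤ : IntermediateField ℚ K) : ℤ) with hLe
    set li : ℤ := (lambdaTower K (c i) : ℤ) with hlie
    set lj : ℤ := (lambdaTower K (c j) : ℤ) with hlje
    have hBgt : (1 : ℝ) < B := by
      have := hfrpos (c j)
      have : (1 : ℝ) ≤ (Module.finrank (c j) K : ℝ) := by exact_mod_cast this
      nlinarith
    have hBpos : (0 : ℝ) < B := lt_trans one_pos hBgt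
    have hBA : B ≤ A := by
      have := hfrle i j hij
      have : (Module.finrank (c j) K : ℝ) ≤ (Module.finrank (c i) K : ℝ) := by
        exact_mod_cast this
      nlinarith
    have hApos : (0 : ℝ) < A := lt_of_lt_of_le hBpos hBA
    have hlij : li < lj := by
      rw [hlie, hlje]; exact_mod_cast hstep i j hij
    have hiL : li ≤ L := by
      rw [hlie, hLe]; exact_mod_cast hle i
    -- A ^ (li - L) ≤ B ^ (li - L) since li - L ≤ 0 and 1 ≤ B ≤ A
    have h1 : A ^ (li - L) ≤ B ^ (li - L) := by
      obtain ⟨m, hm⟩ : ∃ m : ℕ, L - li = (m : ℤ) :=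
        ⟨(L - li).toNat, (Int.toNat_of_nonneg (by omega)).symm⟩
      have hli : li - L = -(m : ℤ) := by omega
      rw [hli, zpow_neg, zpow_neg, zpow_natCast, zpow_natCast]
      have hBm : (0 : ℝ) < B ^ m := pow_pos hBpos m
      exact inv_anti₀ hBm (pow_le_pow_left₀ hBpos.le hBA m)
    have h2 : B ^ (li - L) < B ^ (lj - L) :=
      zpow_lt_zpow_right₀ hBgt (by omega)
    exact lt_of_le_of_lt h1 h2
  refine ⟨?_, fun i j hij => key i j hij, ?_⟩
  · unfold aleph
    apply zpow_pos
    have := hfrpos (c 0)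
    have : (1 : ℝ) ≤ (Module.finrank (c 0) K : ℝ) := by exact_mod_cast this
    nlinarith
  · rw [hlast]
    unfold aleph
    rw [sub_self, zpow_zero]
end

section
/- Let k be a number field, let k' be a subfield with ℚ ⊆ k' ⊆ k, and let α ∈ k with α ∉ k'. Then ℵ(k'(α)) − ℵ(k')·[k : k'] ≥ 2^{λ(k') − λ(k)} · ([k : k'])^{λ(k') − λ(k) + 1}. -/
open Module IntermediateField

section Aux

variable {K : Type*} [Field K] [NumberField K]

lemma finrank_lt_of_lt' {L1 L2 : IntermediateField ℚ K} (h : L1 < L2) :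
    finrank ℚ L1 < finrank ℚ L2 := by
  have h' : Subalgebra.toSubmodule L1.toSubalgebra < Subalgebra.toSubmodule L2.toSubalgebra :=
    Subalgebra.toSubmodule.lt_iff_lt.2 (toSubalgebra_lt_toSubalgebra.2 h)
  exact Submodule.finrank_lt_finrank_of_lt h'

/-- the chain set -/
def chainSet (K : Type*) [Field K] [NumberField K] (F : IntermediateField ℚ K) : Set ℕ :=
  {n | ∃ c : Fin (n + 1) → IntermediateField ℚ K,
    StrictMono c ∧ c 0 = ⊥ ∧ c (Fin.last n) = F}

lemma lambdaTower_eq_sSup (F : IntermediateField ℚ K) :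
    lambdaTower K F = sSup (chainSet K F) := rfl

lemma chainSet_bddAbove (F : IntermediateField ℚ K) : BddAbove (chainSet K F) := by
  refine ⟨finrank ℚ K, fun n hn => ?_⟩
  obtain ⟨c, hc, hc0, hcl⟩ := hn
  have key : ∀ i : Fin (n + 1), (i : ℕ) < finrank ℚ (c i) := by
    intro i
    induction i using Fin.induction with
    | zero => simpa using Module.finrank_pos (R := ℚ) (M := (c 0))
    | succ i ih =>
      have := finrank_lt_of_lt' (hc (Fin.castSucc_lt_succ : Fin.castSucc i < i.succ))
      simp only [Fin.val_succ, Fin.coe_castSucc] at *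
      omega
  have h1 := key (Fin.last n)
  have h2 : finrank ℚ (c (Fin.last n)) ≤ finrank ℚ K := by
    have : finrank ℚ (c (Fin.last n)) * finrank (c (Fin.last n)) K = finrank ℚ K :=
      Module.finrank_mul_finrank ℚ (c (Fin.last n)) K
    nlinarith [Module.finrank_pos (R := (c (Fin.last n))) (M := K)]
  simp only [Fin.val_last] at h1
  omega

lemma chainSet_nonempty (F : IntermediateField ℚ K) : (chainSet K F).Nonempty := by
  rcases eq_or_ne F ⊥ with rfl | h
  · refine ⟨0, fun _ => ⊥, fun i j hij => ?_, rfl, rfl⟩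
    simp [Fin.lt_def] at hij
  · refine ⟨1, ![⊥, F], ?_, rfl, rfl⟩
    intro i j hij
    fin_cases i <;> fin_cases j <;> simp_all <;> exact bot_lt_iff_ne_bot.2 h

lemma lambda_mem (F : IntermediateField ℚ K) : lambdaTower K F ∈ chainSet K F :=
  Nat.sSup_mem (chainSet_nonempty F) (chainSet_bddAbove F)

lemma lambda_succ_le {F F' : IntermediateField ℚ K} (h : F < F') :
    lambdaTower K F + 1 ≤ lambdaTower K F' := by
  obtain ⟨c, hc, hc0, hcl⟩ := lambda_mem (K := K) F
  rw [lambdaTower_eq_sSup F']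
  refine le_csSup (chainSet_bddAbove F') ?_
  refine ⟨Fin.snoc c F', ?_, ?_, ?_⟩
  · intro i j hij
    rcases Fin.eq_castSucc_or_eq_last j with ⟨j', rfl⟩ | rfl
    · have hi : i < Fin.last (lambdaTower K F + 1) := lt_of_lt_of_le hij (Fin.le_last _)
      obtain ⟨i', rfl⟩ := (Fin.eq_castSucc_or_eq_last i).resolve_right
        (by rintro rfl; exact absurd hi (lt_irrefl _))
      simp only [Fin.snoc_castSucc]
      exact hc (by exact_mod_cast hij)
    · obtain ⟨i', rfl⟩ := (Fin.eq_castSucc_or_eq_last i).resolve_right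
        (by rintro rfl; exact absurd hij (lt_irrefl _))
      simp only [Fin.snoc_castSucc, Fin.snoc_last]
      calc c i' ≤ c (Fin.last (lambdaTower K F)) := hc.monotone (Fin.le_last _)
        _ = F := hcl
        _ < F' := h
  · rw [show (0 : Fin (lambdaTower K F + 1 + 1)) = Fin.castSucc 0 from rfl,
      Fin.snoc_castSucc, hc0]
  · simp

lemma lambda_le_top (F : IntermediateField ℚ K) :
    lambdaTower K F ≤ lambdaTower K (⊤ : IntermediateField ℚ K) := by
  rcases eq_or_ne F ⊤ with rfl | h
  · exact le_rfl
  · have := lambda_succ_le (K := K) (lt_top_iff_ne_top.2 h)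
    omega

end Aux

/-- **(Akhtari–Vaaler, Lemma 6.2).**  If `ℚ ⊆ k' ⊆ k` and `α ∈ k`, `α ∉ k'`, then
`ℵ(k'(α)) - ℵ(k')·[k : k'] ≥ 2^{λ(k') - λ(k)}·([k : k'])^{λ(k') - λ(k) + 1}`. -/


theorem aleph_adjoin_sub_ge (K : Type*) [Field K] [NumberField K]
    (F : IntermediateField ℚ K) (α : K) (hα : α ∉ F) :
    (2 : ℝ) ^ ((lambdaTower K F : ℤ) - (lambdaTower K (⊤ : IntermediateField ℚ K) : ℤ)) *
        (Module.finrank F K : ℝ) ^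
          ((lambdaTower K F : ℤ) - (lambdaTower K (⊤ : IntermediateField ℚ K) : ℤ) + 1) ≤
      aleph K (F ⊔ IntermediateField.adjoin ℚ ({α} : Set K)) -
        aleph K F * (Module.finrank F K : ℝ) := by
  set F' := F ⊔ IntermediateField.adjoin ℚ ({α} : Set K) with hF'
  have hFF' : F < F' := by
    refine lt_of_le_of_ne le_sup_left (fun h => hα ?_)
    rw [h]
    exact (le_sup_right : IntermediateField.adjoin ℚ ({α} : Set K) ≤ _)
      (IntermediateField.subset_adjoin ℚ _ rfl)
  have hFtop : F < ⊤ := lt_top_iff_ne_top.2 (fun h => hα (h ▸ trivial))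
  set e : ℤ := (lambdaTower K F : ℤ) - (lambdaTower K (⊤ : IntermediateField ℚ K) : ℤ) with he
  set b : ℤ := (lambdaTower K F' : ℤ) - (lambdaTower K (⊤ : IntermediateField ℚ K) : ℤ) with hb
  have heb : e + 1 ≤ b := by
    have := lambda_succ_le (K := K) hFF'
    omega
  have hb0 : b ≤ 0 := by
    have := lambda_le_top (K := K) F'
    omega
  set r : ℝ := (finrank F K : ℝ) with hr
  set r' : ℝ := (finrank F' K : ℝ) with hr'
  have hr'1 : (1 : ℝ) ≤ r' := by
    rw [hr']
    exact_mod_cast Module.finrank_pos (R := F') (M := K)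
  have hrr' : r' ≤ r := by
    have t1 : (finrank ℚ F : ℝ) * r = (finrank ℚ K : ℝ) := by
      rw [hr]
      exact_mod_cast Module.finrank_mul_finrank ℚ F K
    have t2 : (finrank ℚ F' : ℝ) * r' = (finrank ℚ K : ℝ) := by
      rw [hr']
      exact_mod_cast Module.finrank_mul_finrank ℚ F' K
    have t3 : (finrank ℚ F : ℝ) < (finrank ℚ F' : ℝ) := by
      exact_mod_cast finrank_lt_of_lt' hFF'
    have t4 : (0 : ℝ) < finrank ℚ F := by
      exact_mod_cast Module.finrank_pos (R := ℚ) (M := F)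
    have t5 : (0 : ℝ) ≤ r' := by linarith
    nlinarith
  have hr1 : (1 : ℝ) ≤ r := le_trans hr'1 hrr'
  have h2r' : (0 : ℝ) < 2 * r' := by linarith
  have h2r'1 : (1 : ℝ) ≤ 2 * r' := by linarith
  have hle : 2 * r' ≤ 2 * r := by linarith
  have key : (2 * r) ^ (e + 1) ≤ (2 * r') ^ b := by
    calc (2 * r) ^ (e + 1) ≤ (2 * r') ^ (e + 1) := by
          have hc : e + 1 = -((-(e + 1)).toNat : ℤ) := by omega
          rw [hc, zpow_neg, zpow_neg, zpow_natCast, zpow_natCast]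
          exact inv_anti₀ (pow_pos h2r' _) (pow_le_pow_left₀ (le_of_lt h2r') hle _)
      _ ≤ (2 * r') ^ b := zpow_le_zpow_right₀ h2r'1 heb
  have h3 : (2 * r) ^ (e + 1) = 2 ^ e * r ^ (e + 1) + 2 ^ e * r ^ (e + 1) := by
    rw [mul_zpow, zpow_add_one₀ (two_ne_zero)]; ring
  have h4 : aleph K F * r = 2 ^ e * r ^ (e + 1) := by
    rw [aleph, ← he, ← hr, mul_zpow, zpow_add_one₀ (by positivity : r ≠ 0)]; ring
  rw [aleph, ← hb, ← hr', h4]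
  linarith [key, h3]
end

section
/- Let k ⊆ l be number fields with r(l) > r(k). For each archimedean place v of k choose a place ŵ_v of l above v, let T_v be the set of places of l above v other than ŵ_v, and let S(l/k) = ∪_{v|∞} T_v, a set of cardinality r(l/k) = r(l) - r(k). On ℝ^{S(l/k)} define the generalized Schinzel norm ∇(x) = Σ_{v|∞} δ(π_{T_v}(x)), where δ(y) = (1/2)|Σ_s y_s| + (1/2)Σ_s |y_s| and π_{T_v} is the coordinate projection onto the subspace of vectors supported on T_v. If α ∈ F_l is a relative unit in E_{l/k}, and x(α) = ([l_w : ℚ_w]·log‖α‖_w)_{w ∈ S(l/k)}, then ∇(x(α)) = [l : ℚ]·h(α). -/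
open NumberField

/-- The homomorphism `F_l → F_k` on unit groups modulo torsion induced by the relative norm. -/
noncomputable def relNormMap (K L : Type*) [Field K] [NumberField K] [Field L] [NumberField L]
    [Algebra K L] :
    ((𝓞 L)ˣ ⧸ NumberField.Units.torsion L) →* ((𝓞 K)ˣ ⧸ NumberField.Units.torsion K) :=
  QuotientGroup.map _ _ (Units.map (RingOfIntegers.norm K : 𝓞 L →* 𝓞 K))
    (fun x hx => (CommGroup.mem_torsion _).2
      ((Units.map (RingOfIntegers.norm K : 𝓞 L →* 𝓞 K)).isOfFinOrder
        ((CommGroup.mem_torsion _).1 hx)))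

/-- The group `E_{l/k}` of relative units: the kernel of the norm map `F_l → F_k`. -/
noncomputable def relUnits (K L : Type*) [Field K] [NumberField K] [Field L] [NumberField L]
    [Algebra K L] : Subgroup ((𝓞 L)ˣ ⧸ NumberField.Units.torsion L) :=
  (relNormMap K L).ker

/-- The homomorphism `F_k → F_l` induced by the inclusion `O_k ⊆ O_l`. -/
noncomputable def inclMap (K L : Type*) [Field K] [NumberField K] [Field L] [NumberField L]
    [Algebra K L] :
    ((𝓞 K)ˣ ⧸ NumberField.Units.torsion K) →* ((𝓞 L)ˣ ⧸ NumberField.Units.torsion L) :=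
  QuotientGroup.map _ _ (Units.map (algebraMap (𝓞 K) (𝓞 L) : 𝓞 K →* 𝓞 L))
    (fun x hx => (CommGroup.mem_torsion _).2
      ((Units.map (algebraMap (𝓞 K) (𝓞 L) : 𝓞 K →* 𝓞 L)).isOfFinOrder
        ((CommGroup.mem_torsion _).1 hx)))

/-- The denominator ideal of an element `α` of a number field `K`. -/
noncomputable def denIdeal (K : Type*) [Field K] [NumberField K] (α : K) : Ideal (𝓞 K) :=
  Submodule.colon (1 : Submodule (𝓞 K) K) (Submodule.span (𝓞 K) {α})

/-- The absolute logarithmic Weil height `h(α) = Σ_v log⁺ |α|_v` of an element `α` of a number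
field `K`.  The nonarchimedean contribution is computed as the logarithm of the absolute norm of
the denominator ideal of `α`. -/
noncomputable def logHeight {K : Type*} [Field K] [NumberField K] (α : K) : ℝ :=
  (Module.finrank ℚ K : ℝ)⁻¹ *
    ((∑ w : InfinitePlace K, (w.mult : ℝ) * Real.log (max 1 (w α))) +
      Real.log (Ideal.absNorm (denIdeal K α)))

section AVaux
open NumberField.InfinitePlace Finset

open scoped Classical in
private lemma AV_prod_abs_filter_comp (K : Type*) {L : Type*} [Field K] [NumberField K] [Field L]
    [NumberField L] [Algebra K L] (v : InfinitePlace K) (x : L) :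
    ∏ ψ ∈ univ.filter (fun ψ : L →+* ℂ => ψ.comp (algebraMap K L) = v.embedding),
      ‖ψ x‖ = v (Algebra.norm K x) := by
  letI : Algebra K ℂ := v.embedding.toAlgebra
  have hfd : FiniteDimensional K L := Module.Finite.of_restrictScalars_finite ℚ K L
  rw [← norm_embedding_eq]
  have h : (v.embedding : K →+* ℂ) (Algebra.norm K x) = algebraMap K ℂ (Algebra.norm K x) := rfl
  rw [h, Algebra.norm_eq_prod_embeddings, norm_prod]
  refine (Finset.prod_bij (fun (σ : L →ₐ[K] ℂ) _ => (σ : L →+* ℂ)) ?_ ?_ ?_ ?_).symm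
  · intro σ _
    simp only [mem_filter, mem_univ, true_and]
    exact RingHom.ext fun k => σ.commutes k
  · intro σ _ τ _ h
    exact AlgHom.coe_ringHom_injective h
  · intro ψ hψ
    exact ⟨⟨ψ, fun k => RingHom.congr_fun (mem_filter.mp hψ).2 k⟩, mem_univ _, rfl⟩
  · intro σ _
    rfl

open scoped Classical in
private lemma AV_prod_pow_mult_comap (K : Type*) {L : Type*} [Field K] [NumberField K] [Field L]
    [NumberField L] [Algebra K L] (v : InfinitePlace K) (x : L) :
    ∏ w ∈ univ.filter (fun w : InfinitePlace L => w.comap (algebraMap K L) = v),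
      (w x) ^ w.mult = v (Algebra.norm K x) ^ v.mult := by
  have hB : ∏ w ∈ univ.filter (fun w : InfinitePlace L => w.comap (algebraMap K L) = v),
      (w x) ^ w.mult
      = ∏ ψ ∈ univ.filter (fun ψ : L →+* ℂ => (mk ψ).comap (algebraMap K L) = v),
        ‖ψ x‖ := by
    rw [← Finset.prod_fiberwise_of_maps_to (g := fun ψ : L →+* ℂ => mk ψ)
      (t := univ.filter (fun w : InfinitePlace L => w.comap (algebraMap K L) = v))
      (fun ψ hψ => by
        simp only [mem_filter, mem_univ, true_and] at hψ ⊢; exact hψ)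
      (fun ψ => ‖ψ x‖)]
    refine prod_congr rfl fun w hw => ?_
    have hset : ((univ.filter (fun ψ : L →+* ℂ => (mk ψ).comap (algebraMap K L) = v)).filter
        (fun ψ => InfinitePlace.mk ψ = w)) = univ.filter (fun ψ : L →+* ℂ => InfinitePlace.mk ψ = w) := by
      ext ψ
      simp only [mem_filter, mem_univ, true_and]
      refine ⟨fun h => h.2, fun h => ⟨?_, h⟩⟩
      rw [h]
      exact (mem_filter.mp hw).2
    rw [hset]
    symm
    calc ∏ ψ ∈ univ.filter (fun ψ : L →+* ℂ => InfinitePlace.mk ψ = w), ‖ψ x‖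
        = ∏ _ψ ∈ univ.filter (fun ψ : L →+* ℂ => InfinitePlace.mk ψ = w), w x :=
          prod_congr rfl (fun ψ hψ => by rw [← (mem_filter.mp hψ).2, InfinitePlace.apply])
      _ = (w x) ^ w.mult := by rw [prod_const, card_filter_mk_eq]
  have hA : univ.filter (fun ψ : L →+* ℂ => (mk ψ).comap (algebraMap K L) = v)
      = univ.filter (fun ψ : L →+* ℂ => ψ.comp (algebraMap K L) = v.embedding ∨
          ψ.comp (algebraMap K L) = ComplexEmbedding.conjugate v.embedding) := by
    ext ψ
    simp only [mem_filter, mem_univ, true_and]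
    rw [comap_mk]
    conv_lhs => rw [← mk_embedding v]
    rw [mk_eq_iff]
    constructor
    · rintro (h | h)
      · exact Or.inl h
      · refine Or.inr ?_
        rw [← h]
        exact (star_star _).symm
    · rintro (h | h)
      · exact Or.inl h
      · refine Or.inr ?_
        rw [h]
        exact star_star _
  rw [hB, hA]
  by_cases hv : IsReal v
  · have hc : ComplexEmbedding.conjugate v.embedding = v.embedding :=
      ComplexEmbedding.isReal_iff.mp (isReal_iff.mp hv)
    simp only [hc, or_self]
    rw [AV_prod_abs_filter_comp K v x, mult, if_pos hv, pow_one]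
  · have hc : ComplexEmbedding.conjugate v.embedding ≠ v.embedding := by
      intro h
      exact hv (isReal_iff.mpr (ComplexEmbedding.isReal_iff.mpr h))
    rw [filter_or, prod_union ?_]
    · have hconj : ∏ ψ ∈ univ.filter
          (fun ψ : L →+* ℂ => ψ.comp (algebraMap K L) = ComplexEmbedding.conjugate v.embedding),
            ‖ψ x‖
          = ∏ ψ ∈ univ.filter (fun ψ : L →+* ℂ => ψ.comp (algebraMap K L) = v.embedding),
            ‖ψ x‖ := by
        refine Finset.prod_bij (fun ψ _ => ComplexEmbedding.conjugate ψ) ?_ ?_ ?_ ?_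
        · intro ψ hψ
          simp only [mem_filter, mem_univ, true_and] at hψ ⊢
          have : (ComplexEmbedding.conjugate ψ).comp (algebraMap K L)
              = ComplexEmbedding.conjugate (ψ.comp (algebraMap K L)) := rfl
          rw [this, hψ]
          exact star_star _
        · intro ψ _ τ _ h
          exact star_injective h
        · intro ψ hψ
          refine ⟨ComplexEmbedding.conjugate ψ, ?_, star_star ψ⟩
          simp only [mem_filter, mem_univ, true_and] at hψ ⊢
          have : (ComplexEmbedding.conjugate ψ).comp (algebraMap K L)
              = ComplexEmbedding.conjugate (ψ.comp (algebraMap K L)) := rfl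
          rw [this, hψ]
        · intro ψ _
          rw [ComplexEmbedding.conjugate_coe_eq, Complex.norm_conj]
      rw [hconj, AV_prod_abs_filter_comp K v x, mult, if_neg hv, sq]
    · rw [Finset.disjoint_left]
      intro ψ h1 h2
      simp only [mem_filter, mem_univ, true_and] at h1 h2
      rw [h1] at h2
      exact hc h2.symm

end AVaux

open scoped Classical in
/-- **(Akhtari–Vaaler, Lemma 7.1).**  Let `k ⊆ l` be number fields with `r(l) > r(k)`.  For
each archimedean place `v` of `k` choose a place `ŵ_v` of `l` above `v`, and let
`T_v` be the set of remaining places of `l` above `v`.  If `α` is a relative unit in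
`E_{l/k}` and `x(α) = ([l_w : ℚ_w] log ‖α‖_w)_w`, then the generalized Schinzel norm
`∇(x(α)) = Σ_v ((1/2)|Σ_{w ∈ T_v} x(α)_w| + (1/2) Σ_{w ∈ T_v} |x(α)_w|)` equals
`[l : ℚ] h(α)`. -/
theorem nabla_eq_height_of_relUnit (K L : Type*) [Field K] [NumberField K]
    [Field L] [NumberField L] [Algebra K L]
    (hrank : NumberField.Units.rank K < NumberField.Units.rank L)
    (hw : InfinitePlace K → InfinitePlace L)
    (hw_sec : ∀ v, (hw v).comap (algebraMap K L) = v)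
    (α : (𝓞 L)ˣ)
    (hα : (↑α : (𝓞 L)ˣ ⧸ NumberField.Units.torsion L) ∈ relUnits K L) :
    (∑ v : InfinitePlace K,
        ((1 / 2 : ℝ) *
            |∑ w ∈ Finset.univ.filter
                (fun w : InfinitePlace L => w.comap (algebraMap K L) = v ∧ w ≠ hw v),
              (w.mult : ℝ) * Real.log (w ((α : 𝓞 L) : L))| +
          (1 / 2 : ℝ) *
            ∑ w ∈ Finset.univ.filter
                (fun w : InfinitePlace L => w.comap (algebraMap K L) = v ∧ w ≠ hw v),
              |(w.mult : ℝ) * Real.log (w ((α : 𝓞 L) : L))|)) =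
      (Module.finrank ℚ L : ℝ) * logHeight ((α : 𝓞 L) : L) := by
  set x : L := ((α : 𝓞 L) : L) with hxdef
  have hx0 : x ≠ 0 := Units.coe_ne_zero α
  -- the norm of α is a torsion unit, so has all places equal to 1
  have hN : ∀ v : InfinitePlace K, v (Algebra.norm K x) = 1 := by
    intro v
    have h1 : (Units.map (RingOfIntegers.norm K : 𝓞 L →* 𝓞 K) α) ∈ Units.torsion K := by
      have h2 := hα
      rw [relUnits, MonoidHom.mem_ker] at h2
      exact (QuotientGroup.eq_one_iff (N := Units.torsion K)
        (Units.map (RingOfIntegers.norm K : 𝓞 L →* 𝓞 K) α)).mp h2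
    have h3 := (Units.mem_torsion K).mp h1 v
    simpa using h3
  -- the sum of the log-vector over the places above any fixed v vanishes
  have hsumv : ∀ v : InfinitePlace K,
      ∑ w ∈ Finset.univ.filter (fun w : InfinitePlace L => w.comap (algebraMap K L) = v),
        (w.mult : ℝ) * Real.log (w x) = 0 := by
    intro v
    have h := congrArg Real.log (AV_prod_pow_mult_comap K v x)
    rw [Real.log_prod
        (fun w _ => pow_ne_zero _ (ne_of_gt (NumberField.InfinitePlace.pos_iff.mpr hx0))), hN v, one_pow,
      Real.log_one] at h
    simpa [Real.log_pow] using h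
  -- the total sum vanishes
  have hsum : ∑ w : InfinitePlace L, (w.mult : ℝ) * Real.log (w x) = 0 := by
    rw [← Finset.sum_fiberwise_of_maps_to
      (g := fun w : InfinitePlace L => w.comap (algebraMap K L)) (t := Finset.univ)
      (fun _ _ => Finset.mem_univ _) (fun w : InfinitePlace L => (w.mult : ℝ) * Real.log (w x))]
    exact Finset.sum_eq_zero fun v _ => hsumv v
  -- the denominator ideal is trivial
  have hden : denIdeal L x = ⊤ := by
    rw [eq_top_iff]
    intro r _
    rw [denIdeal, Submodule.mem_colon]
    intro p hp
    have hx1 : x ∈ (1 : Submodule (𝓞 L) L) := by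
      rw [Submodule.one_eq_range]
      exact LinearMap.mem_range.mpr ⟨(α : 𝓞 L), rfl⟩
    have hsp : Submodule.span (𝓞 L) {x} ≤ (1 : Submodule (𝓞 L) L) :=
      Submodule.span_le.mpr (by simpa using hx1)
    exact Submodule.smul_mem _ r (hsp hp)
  -- the right-hand side
  have hfr : (Module.finrank ℚ L : ℝ) ≠ 0 := Nat.cast_ne_zero.mpr Module.finrank_pos.ne'
  have hRHS : (Module.finrank ℚ L : ℝ) * logHeight x
      = ∑ w : InfinitePlace L, (w.mult : ℝ) * Real.log (max 1 (w x)) := by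
    rw [logHeight, hden, Ideal.absNorm_top, Nat.cast_one, Real.log_one, add_zero,
      ← mul_assoc, mul_inv_cancel₀ hfr, one_mul]
  -- log of max is max of logs
  have hlogmax : ∀ w : InfinitePlace L,
      (w.mult : ℝ) * Real.log (max 1 (w x)) = max 0 ((w.mult : ℝ) * Real.log (w x)) := by
    intro w
    have hm : (0 : ℝ) ≤ (w.mult : ℝ) := Nat.cast_nonneg _
    rcases le_total (w x) 1 with h | h
    · rw [max_eq_left h, Real.log_one, mul_zero, eq_comm, max_eq_left]
      exact mul_nonpos_of_nonneg_of_nonpos hm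
        (Real.log_nonpos (AbsoluteValue.nonneg _ _) h)
    · rw [max_eq_right h, eq_comm, max_eq_right]
      exact mul_nonneg hm (Real.log_nonneg h)
  have hmaxabs : ∀ a : ℝ, max 0 a = (a + |a|) / 2 := by
    intro a
    rcases le_total a 0 with h | h
    · rw [max_eq_left h, abs_of_nonpos h]; ring
    · rw [max_eq_right h, abs_of_nonneg h]; ring
  have hRHS2 : (Module.finrank ℚ L : ℝ) * logHeight x
      = (1 / 2 : ℝ) * ∑ w : InfinitePlace L, |(w.mult : ℝ) * Real.log (w x)| := by
    rw [hRHS]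
    simp_rw [hlogmax, hmaxabs, add_div]
    rw [Finset.sum_add_distrib, ← Finset.sum_div, hsum, zero_div, zero_add, ← Finset.sum_div]
    ring
  -- identify the index sets
  have hTv : ∀ v : InfinitePlace K,
      (Finset.univ.filter
        (fun w : InfinitePlace L => w.comap (algebraMap K L) = v ∧ w ≠ hw v))
      = (Finset.univ.filter
          (fun w : InfinitePlace L => w.comap (algebraMap K L) = v)).erase (hw v) := by
    intro v
    ext w
    simp only [Finset.mem_filter, Finset.mem_univ, true_and, Finset.mem_erase]
    tauto
  have hmem : ∀ v : InfinitePlace K, hw v ∈ Finset.univ.filter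
      (fun w : InfinitePlace L => w.comap (algebraMap K L) = v) :=
    fun v => Finset.mem_filter.mpr ⟨Finset.mem_univ _, hw_sec v⟩
  calc (∑ v : InfinitePlace K,
        ((1 / 2 : ℝ) *
            |∑ w ∈ Finset.univ.filter
                (fun w : InfinitePlace L => w.comap (algebraMap K L) = v ∧ w ≠ hw v),
              (w.mult : ℝ) * Real.log (w x)| +
          (1 / 2 : ℝ) *
            ∑ w ∈ Finset.univ.filter
                (fun w : InfinitePlace L => w.comap (algebraMap K L) = v ∧ w ≠ hw v),
              |(w.mult : ℝ) * Real.log (w x)|))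
      = ∑ v : InfinitePlace K, (1 / 2 : ℝ) *
          ∑ w ∈ Finset.univ.filter
              (fun w : InfinitePlace L => w.comap (algebraMap K L) = v),
            |(w.mult : ℝ) * Real.log (w x)| := by
        refine Finset.sum_congr rfl fun v _ => ?_
        rw [hTv v]
        have h1 : ∑ w ∈ (Finset.univ.filter
            (fun w : InfinitePlace L => w.comap (algebraMap K L) = v)).erase (hw v),
              (w.mult : ℝ) * Real.log (w x)
            = - (((hw v).mult : ℝ) * Real.log ((hw v) x)) := by
          have h2 := Finset.sum_erase_add _
            (fun w : InfinitePlace L => (w.mult : ℝ) * Real.log (w x)) (hmem v)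
          rw [hsumv v] at h2
          linarith
        rw [h1, abs_neg,
          ← Finset.add_sum_erase _
            (fun w : InfinitePlace L => |(w.mult : ℝ) * Real.log (w x)|) (hmem v), mul_add]
    _ = (1 / 2 : ℝ) * ∑ w : InfinitePlace L, |(w.mult : ℝ) * Real.log (w x)| := by
        rw [← Finset.mul_sum]
        congr 1
        exact Finset.sum_fiberwise_of_maps_to
          (g := fun w : InfinitePlace L => w.comap (algebraMap K L)) (t := Finset.univ)
          (fun _ _ => Finset.mem_univ _)
          (fun w : InfinitePlace L => |(w.mult : ℝ) * Real.log (w x)|)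
    _ = (Module.finrank ℚ L : ℝ) * logHeight x := hRHS2.symm
end
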